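/- For any subset A of ℝ, the Hattori space (ℝ, τ_A) is connected if and only if A = ℝ. -/

import Mathlib

open Set

/-- The Hattori topology on ℝ: points of `A` have Euclidean neighborhood base
`(x-ε, x+ε)`, points outside `A` have Sorgenfrey neighborhood base `[x, x+ε)`. -/
def hattori (A : Set ℝ) : TopologicalSpace ℝ where
  IsOpen U := ∀ x ∈ U, ∃ ε > (0 : ℝ),
    (x ∈ A → Ioo (x - ε) (x + ε) ⊆ U) ∧ (x ∉ A → Ico x (x + ε) ⊆ U)
  isOpen_univ := fun x _ => ⟨1, one_pos, fun _ => subset_univ _, fun _ => subset_univ _⟩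
  isOpen_inter := by
    intro U V hU hV x hx
    obtain ⟨ε₁, hε₁, h₁, h₁'⟩ := hU x hx.1
    obtain ⟨ε₂, hε₂, h₂, h₂'⟩ := hV x hx.2
    have l1 := min_le_left ε₁ ε₂
    have l2 := min_le_right ε₁ ε₂
    refine ⟨min ε₁ ε₂, lt_min hε₁ hε₂, fun hA => ?_, fun hA => ?_⟩
    · intro y hy
      exact ⟨h₁ hA ⟨by linarith [hy.1], by linarith [hy.2]⟩,
             h₂ hA ⟨by linarith [hy.1], by linarith [hy.2]⟩⟩
    · intro y hy
      exact ⟨h₁' hA ⟨hy.1, by linarith [hy.2]⟩, h₂' hA ⟨hy.1, by linarith [hy.2]⟩⟩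
  isOpen_sUnion := by
    intro S hS x hx
    obtain ⟨U, hU, hxU⟩ := hx
    obtain ⟨ε, hε, h, h'⟩ := hS U hU x hxU
    exact ⟨ε, hε, fun hA => (h hA).trans (subset_sUnion_of_mem hU),
      fun hA => (h' hA).trans (subset_sUnion_of_mem hU)⟩

/-- The Sorgenfrey (lower limit) topology on ℝ. -/
def sorgenfrey : TopologicalSpace ℝ :=
  TopologicalSpace.generateFrom {S | ∃ a b : ℝ, S = Ico a b}

lemma hattori_univ_eq : hattori Set.univ = (inferInstance : TopologicalSpace ℝ) := by
  apply TopologicalSpace.ext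
  ext U
  constructor
  · intro h
    rw [Metric.isOpen_iff]
    intro x hx
    obtain ⟨ε, hε, h1, _⟩ := h x hx
    exact ⟨ε, hε, by rw [Real.ball_eq_Ioo]; exact h1 (mem_univ x)⟩
  · intro h x hx
    rw [Metric.isOpen_iff] at h
    obtain ⟨ε, hε, hb⟩ := h x hx
    rw [Real.ball_eq_Ioo] at hb
    exact ⟨ε, hε, fun _ => hb, fun hA => absurd (mem_univ x) hA⟩

theorem stmt5 (A : Set ℝ) : @ConnectedSpace ℝ (hattori A) ↔ A = Set.univ := by
  constructor
  · intro h
    by_contra hA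
    obtain ⟨x, hx⟩ : ∃ x, x ∉ A := by
      by_contra hc; push_neg at hc; exact hA (eq_univ_of_forall hc)
    letI := hattori A
    have hU : IsOpen (Ici x) := by
      intro y hy
      rcases eq_or_lt_of_le (mem_Ici.mp hy : x ≤ y) with heq | hlt
      · refine ⟨1, one_pos, fun hyA => absurd (heq ▸ hyA) hx, fun _ => ?_⟩
        intro z hz; exact heq ▸ hz.1
      · refine ⟨y - x, by linarith, fun _ z hz => ?_, fun _ z hz => ?_⟩
        · have := hz.1; simp only [mem_Ici]; linarith
        · have := hz.1; simp only [mem_Ici]; linarith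
    have hV : IsOpen (Iio x) := by
      intro y hy
      refine ⟨x - y, by linarith [mem_Iio.mp hy], fun _ z hz => ?_, fun _ z hz => ?_⟩
      · have := hz.2; simp only [mem_Iio]; linarith
      · have := hz.2; simp only [mem_Iio]; linarith
    have hpc := h.isPreconnected_univ
    have := hpc (Ici x) (Iio x) hU hV
      (fun z _ => le_or_gt x z)
      ⟨x, mem_univ x, le_refl x⟩
      ⟨x - 1, mem_univ _, by simp⟩
    obtain ⟨z, _, hz1, hz2⟩ := this
    exact absurd (mem_Ici.mp hz1) (not_le.mpr (mem_Iio.mp hz2))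
  · rintro rfl
    rw [hattori_univ_eq]
    infer_instance
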